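/- Let I_0 be a nonempty finite set. Every irreducible level-1 H_{I_0}-module W satisfying Condition C_{I_0} (each q_i p_i is semisimple, and p_i w ≠ 0, q_i w ≠ 0 for all nonzero w) is isomorphic to M_*[μ] for some μ : I_0 → ℂ with μ_i ∉ ℤ for all i. -/

import Mathlib

/-- A level-one module for the Heisenberg Lie algebra `H_I` with basis
`{p_i, q_i, k | i ∈ I}`, relations `[p_i, q_j] = δ_{ij} k`, all other brackets zero,
where the central element `k` acts as the identity (level `1`). -/
structure HeisenbergRep (I : Type) (W : Type) [AddCommGroup W] [Module ℂ W] where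
  p : I → Module.End ℂ W
  q : I → Module.End ℂ W
  comm_pp : ∀ i j, Commute (p i) (p j)
  comm_qq : ∀ i j, Commute (q i) (q j)
  comm_pq_same : ∀ i, p i * q i - q i * p i = 1
  comm_pq_ne : ∀ i j, i ≠ j → Commute (p i) (q j)

namespace HeisenbergRep

variable {I : Type} {W : Type} [AddCommGroup W] [Module ℂ W]

/-- A submodule stable under all the Heisenberg operators. -/
def Stable (ρ : HeisenbergRep I W) (S : Submodule ℂ W) : Prop :=
  (∀ i, ∀ w ∈ S, ρ.p i w ∈ S) ∧ (∀ i, ∀ w ∈ S, ρ.q i w ∈ S)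

/-- `S` is a nonzero stable submodule with no proper nonzero stable submodule. -/
def IsSimpleSub (ρ : HeisenbergRep I W) (S : Submodule ℂ W) : Prop :=
  ρ.Stable S ∧ S ≠ ⊥ ∧ ∀ T : Submodule ℂ W, ρ.Stable T → T ≤ S → T = ⊥ ∨ T = S

/-- Irreducibility of the representation. -/
def IsIrreducible (ρ : HeisenbergRep I W) : Prop := ρ.IsSimpleSub ⊤

end HeisenbergRep

/-- An endomorphism is locally finite if every vector lies in a
finitely generated (equivalently, finite-dimensional) stable subspace. -/
def Module.End.LocallyFinite {W : Type} [AddCommGroup W] [Module ℂ W]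
    (T : Module.End ℂ W) : Prop :=
  ∀ w : W, ∃ S : Submodule ℂ W, w ∈ S ∧ S.FG ∧ ∀ v ∈ S, T v ∈ S

/-- An endomorphism is locally nilpotent if every vector is killed by some power of it. -/
def Module.End.LocallyNilpotent {W : Type} [AddCommGroup W] [Module ℂ W]
    (T : Module.End ℂ W) : Prop :=
  ∀ w : W, ∃ n : ℕ, (T ^ n) w = 0

section Laurent

variable {I₀ : Type} [DecidableEq I₀]

/-- The action of `p_i = ∂/∂x_i` on `M_*[μ] = x^μ ℂ[x_i^{±1}]`, in the model where the
basis vector `x^{μ+m}` (for `m : I₀ → ℤ`) is the finitely supported function `δ_m`: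
`∂/∂x_i · x^{μ+m} = (μ_i + m_i) x^{μ+m} x_i^{-1}`. -/
noncomputable def laurentP (mu : I₀ → ℂ) (i : I₀) :
    Module.End ℂ ((I₀ → ℤ) →₀ ℂ) :=
  Finsupp.lsum ℂ fun m : I₀ → ℤ =>
    (mu i + (m i : ℂ)) • Finsupp.lsingle (Function.update m i (m i - 1))

/-- The action of `q_i = x_i` on `M_*[μ]`: `x_i · x^{μ+m} = x^{μ+m+e_i}`. -/
noncomputable def laurentQ (i : I₀) : Module.End ℂ ((I₀ → ℤ) →₀ ℂ) :=
  Finsupp.lsum ℂ fun m : I₀ → ℤ =>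
    (Finsupp.lsingle (Function.update m i (m i + 1)) : ℂ →ₗ[ℂ] (I₀ → ℤ) →₀ ℂ)

end Laurent

namespace CCP

open Module Finset Function Polynomial

set_option linter.unusedSectionVars false

variable {I₀ W : Type} [DecidableEq I₀] [AddCommGroup W] [Module ℂ W]

def hop (ρ : HeisenbergRep I₀ W) (i : I₀) : Module.End ℂ W := ρ.q i * ρ.p i

variable (ρ : HeisenbergRep I₀ W)

lemma comm_qp {i j : I₀} (hij : i ≠ j) : Commute (ρ.q i) (ρ.p j) :=
  (ρ.comm_pq_ne j i hij.symm).symm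

lemma pq_eq (i : I₀) : ρ.p i * ρ.q i = ρ.q i * ρ.p i + 1 := by
  have := ρ.comm_pq_same i
  rw [sub_eq_iff_eq_add] at this
  rw [this, add_comm]

lemma p_mul_hop (i : I₀) : ρ.p i * hop ρ i = hop ρ i * ρ.p i + ρ.p i := by
  unfold hop; rw [← mul_assoc, pq_eq]; noncomm_ring

lemma hop_mul_q (i : I₀) : hop ρ i * ρ.q i = ρ.q i * hop ρ i + ρ.q i := by
  unfold hop; rw [mul_assoc, pq_eq]; noncomm_ring

lemma comm_hop_p {i j : I₀} (hij : j ≠ i) : Commute (hop ρ i) (ρ.p j) :=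
  (comm_qp ρ hij.symm).mul_left (ρ.comm_pp i j)

lemma comm_hop_q {i j : I₀} (hij : j ≠ i) : Commute (hop ρ i) (ρ.q j) :=
  (ρ.comm_qq i j).mul_left (ρ.comm_pq_ne i j hij.symm)

lemma comm_hop_hop (i j : I₀) : Commute (hop ρ i) (hop ρ j) := by
  rcases eq_or_ne j i with rfl | hij
  · exact Commute.refl _
  · exact (comm_hop_q ρ hij).mul_right (comm_hop_p ρ hij)

section vec

variable {i : I₀} {v : W} {c : ℂ}

lemma hop_p_apply (hv : hop ρ i v = c • v) :
    hop ρ i (ρ.p i v) = (c - 1) • ρ.p i v := by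
  have h1 : (ρ.p i * hop ρ i) v = (hop ρ i * ρ.p i + ρ.p i) v := by rw [p_mul_hop]
  simp only [Module.End.mul_apply, LinearMap.add_apply] at h1
  rw [hv, map_smul] at h1
  rw [sub_smul, one_smul]
  exact (eq_sub_of_add_eq h1.symm)

lemma hop_q_apply (hv : hop ρ i v = c • v) :
    hop ρ i (ρ.q i v) = (c + 1) • ρ.q i v := by
  have h1 : (hop ρ i * ρ.q i) v = (ρ.q i * hop ρ i + ρ.q i) v := by rw [hop_mul_q]
  simp only [Module.End.mul_apply, LinearMap.add_apply] at h1
  rw [hv, map_smul] at h1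
  rw [add_smul, one_smul]
  exact h1

lemma hop_ppow_apply (hv : hop ρ i v = c • v) (k : ℕ) :
    hop ρ i ((ρ.p i ^ k) v) = (c - k) • (ρ.p i ^ k) v := by
  induction k with
  | zero => simpa using hv
  | succ k ih =>
      have : (ρ.p i ^ (k + 1)) v = ρ.p i ((ρ.p i ^ k) v) := by
        rw [pow_succ']; rfl
      rw [this, hop_p_apply ρ ih]
      push_cast; ring_nf

lemma hop_qpow_apply (hv : hop ρ i v = c • v) (k : ℕ) :
    hop ρ i ((ρ.q i ^ k) v) = (c + k) • (ρ.q i ^ k) v := by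
  induction k with
  | zero => simpa using hv
  | succ k ih =>
      have : (ρ.q i ^ (k + 1)) v = ρ.q i ((ρ.q i ^ k) v) := by
        rw [pow_succ']; rfl
      rw [this, hop_q_apply ρ ih]
      push_cast; ring_nf

lemma q_ppow_succ (hv : hop ρ i v = c • v) (k : ℕ) :
    ρ.q i ((ρ.p i ^ (k + 1)) v) = (c - k) • (ρ.p i ^ k) v := by
  have h1 : (ρ.p i ^ (k + 1)) v = ρ.p i ((ρ.p i ^ k) v) := by rw [pow_succ']; rfl
  have h2 : ρ.q i (ρ.p i ((ρ.p i ^ k) v)) = hop ρ i ((ρ.p i ^ k) v) := rfl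
  rw [h1, h2, hop_ppow_apply ρ hv]

lemma p_qpow_succ (hv : hop ρ i v = c • v) (k : ℕ) :
    ρ.p i ((ρ.q i ^ (k + 1)) v) = (c + k + 1) • (ρ.q i ^ k) v := by
  have h1 : (ρ.q i ^ (k + 1)) v = ρ.q i ((ρ.q i ^ k) v) := by rw [pow_succ']; rfl
  have h2 : ρ.p i (ρ.q i ((ρ.q i ^ k) v)) = (ρ.p i * ρ.q i) ((ρ.q i ^ k) v) := rfl
  rw [h1, h2, pq_eq]
  simp only [LinearMap.add_apply, Module.End.mul_apply, Module.End.one_apply]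
  have h3 : (ρ.q i) ((ρ.p i) ((ρ.q i ^ k) v)) = hop ρ i ((ρ.q i ^ k) v) := rfl
  rw [h3, hop_qpow_apply ρ hv k]
  module

end vec

lemma cast_toNat_of_nonneg {n : ℤ} (hn : 0 ≤ n) : ((n.toNat : ℕ) : ℂ) = (n : ℂ) := by
  exact_mod_cast congrArg (Int.cast : ℤ → ℂ) (Int.toNat_of_nonneg hn)

section vec2

variable {i : I₀} {v : W} {c : ℂ}

lemma ppow_ne_zero (hnz : ∀ i, ∀ w : W, w ≠ 0 → ρ.p i w ≠ 0 ∧ ρ.q i w ≠ 0)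
    (hv : v ≠ 0) (k : ℕ) : (ρ.p i ^ k) v ≠ 0 := by
  induction k with
  | zero => simpa using hv
  | succ k ih =>
      have h1 : (ρ.p i ^ (k + 1)) v = ρ.p i ((ρ.p i ^ k) v) := by rw [pow_succ']; rfl
      rw [h1]; exact (hnz i _ ih).1

lemma qpow_ne_zero (hnz : ∀ i, ∀ w : W, w ≠ 0 → ρ.p i w ≠ 0 ∧ ρ.q i w ≠ 0)
    (hv : v ≠ 0) (k : ℕ) : (ρ.q i ^ k) v ≠ 0 := by
  induction k with
  | zero => simpa using hv
  | succ k ih =>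
      have h1 : (ρ.q i ^ (k + 1)) v = ρ.q i ((ρ.q i ^ k) v) := by rw [pow_succ']; rfl
      rw [h1]; exact (hnz i _ ih).2

lemma eig_ne_zero (hnz : ∀ i, ∀ w : W, w ≠ 0 → ρ.p i w ≠ 0 ∧ ρ.q i w ≠ 0)
    (hv : hop ρ i v = c • v) (hv0 : v ≠ 0) : c ≠ 0 := by
  intro hc
  subst hc
  rw [zero_smul] at hv
  exact (hnz i _ (hnz i v hv0).1).2 hv

lemma eig_shift_ne (hnz : ∀ i, ∀ w : W, w ≠ 0 → ρ.p i w ≠ 0 ∧ ρ.q i w ≠ 0)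
    (hv : hop ρ i v = c • v) (hv0 : v ≠ 0) (z : ℤ) : c + z ≠ 0 := by
  rcases le_or_gt 0 z with hz | hz
  · have h1 := hop_qpow_apply ρ hv z.toNat
    have h2 := eig_ne_zero ρ hnz h1 (qpow_ne_zero ρ hnz hv0 z.toNat)
    rwa [cast_toNat_of_nonneg hz] at h2
  · have h1 := hop_ppow_apply ρ hv (-z).toNat
    have h2 := eig_ne_zero ρ hnz h1 (ppow_ne_zero ρ hnz hv0 (-z).toNat)
    have h3 : (((-z).toNat : ℕ) : ℂ) = -(z : ℂ) := by
      rw [cast_toNat_of_nonneg (by omega : (0:ℤ) ≤ -z)]; push_cast; ring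
    rw [h3, sub_neg_eq_add] at h2
    exact h2

end vec2

noncomputable def aconst (μ : ℂ) (n : ℤ) : ℂ := ∏ k ∈ Finset.range ((-n).toNat), (μ - k)

lemma aconst_of_nonneg {n : ℤ} (hn : 0 ≤ n) (μ : ℂ) : aconst μ n = 1 := by
  have : (-n).toNat = 0 := Int.toNat_eq_zero.mpr (neg_nonpos.mpr hn)
  simp [aconst, this]

lemma sub_nat_ne_zero {μ : ℂ} (hμ : ∀ z : ℤ, μ + z ≠ 0) (k : ℕ) : μ - (k : ℂ) ≠ 0 := by
  have := hμ (-(k : ℤ))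
  push_cast at this
  intro h; exact this (by linear_combination h)

lemma aconst_ne_zero {μ : ℂ} (hμ : ∀ z : ℤ, μ + z ≠ 0) (n : ℤ) : aconst μ n ≠ 0 :=
  Finset.prod_ne_zero_iff.mpr fun k _ => sub_nat_ne_zero hμ k

noncomputable def opP (ρ : HeisenbergRep I₀ W) (i : I₀) (n : ℤ) : Module.End ℂ W :=
  if 0 ≤ n then ρ.q i ^ n.toNat else ρ.p i ^ (-n).toNat

lemma opP_of_nonneg {n : ℤ} (hn : 0 ≤ n) (i : I₀) : opP ρ i n = ρ.q i ^ n.toNat := if_pos hn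

lemma opP_of_nonpos {n : ℤ} (hn : n ≤ 0) (i : I₀) : opP ρ i n = ρ.p i ^ (-n).toNat := by
  rcases lt_or_eq_of_le hn with h | h
  · exact if_neg (not_le.mpr h)
  · subst h; simp [opP]

lemma comm_opP {i j : I₀} (hij : i ≠ j) (n n' : ℤ) :
    Commute (opP ρ i n) (opP ρ j n') := by
  unfold opP
  split_ifs <;>
    exact Commute.pow_pow
      (by first
        | exact ρ.comm_qq i j
        | exact ρ.comm_pp i j
        | exact comm_qp ρ hij
        | exact ρ.comm_pq_ne i j hij) _ _

lemma comm_q_opP {i j : I₀} (hij : j ≠ i) (n : ℤ) : Commute (ρ.q i) (opP ρ j n) := by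
  unfold opP
  split_ifs
  · exact (ρ.comm_qq i j).pow_right _
  · exact (comm_qp ρ hij.symm).pow_right _

lemma comm_p_opP {i j : I₀} (hij : j ≠ i) (n : ℤ) : Commute (ρ.p i) (opP ρ j n) := by
  unfold opP
  split_ifs
  · exact (ρ.comm_pq_ne i j hij.symm).pow_right _
  · exact (ρ.comm_pp i j).pow_right _

lemma comm_hop_opP {i j : I₀} (hij : j ≠ i) (n : ℤ) : Commute (hop ρ i) (opP ρ j n) := by
  unfold opP
  split_ifs
  · exact (comm_hop_q ρ hij).pow_right _
  · exact (comm_hop_p ρ hij).pow_right _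

lemma opP_ne_zero (hnz : ∀ i, ∀ w : W, w ≠ 0 → ρ.p i w ≠ 0 ∧ ρ.q i w ≠ 0)
    {v : W} (hv : v ≠ 0) (i : I₀) (n : ℤ) : opP ρ i n v ≠ 0 := by
  unfold opP
  split_ifs
  · exact qpow_ne_zero ρ hnz hv _
  · exact ppow_ne_zero ρ hnz hv _

section key

variable {i : I₀} {v : W} {μ : ℂ}

lemma key_q (hv : hop ρ i v = μ • v) (hμ : ∀ z : ℤ, μ + z ≠ 0) (n : ℤ) :
    ρ.q i ((aconst μ n)⁻¹ • opP ρ i n v) = (aconst μ (n + 1))⁻¹ • opP ρ i (n + 1) v := by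
  rcases le_or_gt 0 n with hn | hn
  · rw [aconst_of_nonneg hn μ, aconst_of_nonneg (by omega) μ,
      opP_of_nonneg ρ hn, opP_of_nonneg ρ (by omega : (0:ℤ) ≤ n + 1)]
    have h1 : (n + 1).toNat = n.toNat + 1 := by omega
    rw [h1]
    have h3 : (ρ.q i ^ (n.toNat + 1)) v = ρ.q i ((ρ.q i ^ n.toNat) v) := by rw [pow_succ']; rfl
    simp [h3]
  · obtain ⟨k, hk⟩ : ∃ k : ℕ, (-n).toNat = k + 1 := ⟨(-n).toNat - 1, by omega⟩
    rw [opP_of_nonpos ρ (by omega), opP_of_nonpos ρ (by omega : n + 1 ≤ 0), hk]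
    have h2 : (-(n + 1)).toNat = k := by omega
    rw [h2, map_smul, q_ppow_succ ρ hv k]
    have h3 : aconst μ n = aconst μ (n + 1) * (μ - k) := by
      unfold aconst
      rw [hk, h2, Finset.prod_range_succ]
    rw [h3, smul_smul]
    congr 1
    have hk0 := sub_nat_ne_zero hμ k
    have ha0 := aconst_ne_zero hμ (n + 1)
    field_simp

lemma key_p (hv : hop ρ i v = μ • v) (hμ : ∀ z : ℤ, μ + z ≠ 0) (n : ℤ) :
    ρ.p i ((aconst μ n)⁻¹ • opP ρ i n v)
      = (μ + n) • (aconst μ (n - 1))⁻¹ • opP ρ i (n - 1) v := by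
  rcases le_or_gt n 0 with hn | hn
  · rw [opP_of_nonpos ρ hn, opP_of_nonpos ρ (by omega : n - 1 ≤ 0)]
    set K := (-n).toNat with hK
    have hKn : (K : ℂ) = -(n : ℂ) := by
      have := cast_toNat_of_nonneg (by omega : (0:ℤ) ≤ -n)
      push_cast at this
      rw [← hK] at this
      exact this
    have h2 : (-(n - 1)).toNat = K + 1 := by omega
    rw [h2]
    have h3 : (ρ.p i ^ (K + 1)) v = ρ.p i ((ρ.p i ^ K) v) := by rw [pow_succ']; rfl
    have h4 : aconst μ (n - 1) = aconst μ n * (μ - K) := by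
      unfold aconst
      rw [h2, ← hK, Finset.prod_range_succ]
    rw [map_smul, ← h3, h4, smul_smul]
    congr 1
    have h5 : μ - (K : ℂ) = μ + n := by rw [hKn]; ring
    have h6 : μ + (n : ℂ) ≠ 0 := hμ n
    have h7 : aconst μ n ≠ 0 := aconst_ne_zero hμ n
    rw [h5]
    field_simp
  · have hn0 : 0 ≤ n := le_of_lt hn
    rw [aconst_of_nonneg hn0 μ, aconst_of_nonneg (by omega) μ,
      opP_of_nonneg ρ hn0, opP_of_nonneg ρ (by omega : (0:ℤ) ≤ n - 1)]
    obtain ⟨k, hk⟩ : ∃ k : ℕ, n.toNat = k + 1 := ⟨n.toNat - 1, by omega⟩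
    have h2 : (n - 1).toNat = k := by omega
    rw [hk, h2, inv_one, one_smul, one_smul, p_qpow_succ ρ hv k]
    have h4 : (μ + k + 1) = μ + n := by
      have hcast : (n : ℂ) = (k : ℂ) + 1 := by
        have : ((n.toNat : ℕ) : ℂ) = (n : ℂ) := cast_toNat_of_nonneg hn0
        rw [hk] at this; push_cast at this; exact this.symm
      rw [hcast]; ring
    rw [h4]

end key

section fam

variable [Fintype I₀]

noncomputable def wprod (ρ : HeisenbergRep I₀ W) (m : I₀ → ℤ) : Module.End ℂ W :=
  Finset.univ.noncommProd (fun j => opP ρ j (m j)) (fun _ _ _ _ hxy => comm_opP ρ hxy _ _)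

noncomputable def wfam (ρ : HeisenbergRep I₀ W) (μ : I₀ → ℂ) (w : W) (m : I₀ → ℤ) : W :=
  (∏ j, (aconst (μ j) (m j))⁻¹) • wprod ρ m w

variable {μ : I₀ → ℂ} {w : W}

lemma wfam_op (hw : ∀ j, hop ρ j w = μ j • w)
    (i : I₀) (m : I₀ → ℤ) (T : Module.End ℂ W)
    (hT : ∀ j, j ≠ i → ∀ k, Commute T (opP ρ j k)) (n' : ℤ) (c : ℂ)
    (hkey : ∀ v : W, hop ρ i v = μ i • v →
      T ((aconst (μ i) (m i))⁻¹ • opP ρ i (m i) v) = c • (aconst (μ i) n')⁻¹ • opP ρ i n' v) :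
    T (wfam ρ μ w m) = c • wfam ρ μ w (Function.update m i n') := by
  classical
  set R : Module.End ℂ W :=
    (Finset.univ.erase i).noncommProd (fun j => opP ρ j (m j))
      (fun _ _ _ _ hxy => comm_opP ρ hxy _ _) with hRdef
  have hsplit : wprod ρ m = opP ρ i (m i) * R :=
    (Finset.mul_noncommProd_erase Finset.univ (Finset.mem_univ i) _ _).symm
  have herase :
      (Finset.univ.erase i).noncommProd (fun j => opP ρ j (Function.update m i n' j))
        (fun _ _ _ _ hxy => comm_opP ρ hxy _ _) = R := by
    refine Finset.noncommProd_congr rfl (fun j hj => ?_) _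
    rw [Function.update_of_ne (Finset.mem_erase.mp hj).1]
  have hsplit' : wprod ρ (Function.update m i n') = opP ρ i n' * R := by
    have h0 :=
      (Finset.mul_noncommProd_erase Finset.univ (Finset.mem_univ i)
        (fun j => opP ρ j (Function.update m i n' j))
        (fun _ _ _ _ hxy => comm_opP ρ hxy _ _)).symm
    rw [Function.update_self] at h0
    rw [wprod, h0, herase]
  have hR : hop ρ i (R w) = μ i • R w := by
    have hc : Commute (hop ρ i) R :=
      Finset.noncommProd_commute _ _ _ _
        (fun j hj => comm_hop_opP ρ (Finset.mem_erase.mp hj).1 _)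
    calc hop ρ i (R w) = (hop ρ i * R) w := rfl
      _ = (R * hop ρ i) w := by rw [hc.eq]
      _ = R (hop ρ i w) := rfl
      _ = μ i • R w := by rw [hw i, map_smul]
  have hprod : (∏ j, (aconst (μ j) (m j))⁻¹)
      = (aconst (μ i) (m i))⁻¹ * ∏ j ∈ Finset.univ.erase i, (aconst (μ j) (m j))⁻¹ :=
    (Finset.mul_prod_erase Finset.univ _ (Finset.mem_univ i)).symm
  have hprod' : (∏ j, (aconst (μ j) ((Function.update m i n') j))⁻¹)
      = (aconst (μ i) n')⁻¹ * ∏ j ∈ Finset.univ.erase i, (aconst (μ j) (m j))⁻¹ := by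
    rw [← Finset.mul_prod_erase Finset.univ _ (Finset.mem_univ i), Function.update_self]
    congr 1
    exact Finset.prod_congr rfl
      (fun j hj => by rw [Function.update_of_ne (Finset.mem_erase.mp hj).1])
  unfold wfam
  rw [hsplit, hsplit', hprod, hprod', Module.End.mul_apply, Module.End.mul_apply]
  rw [mul_comm ((aconst (μ i) (m i))⁻¹), mul_smul, map_smul, hkey (R w) hR,
    smul_smul, smul_smul, smul_smul]
  congr 1
  ring

lemma wfam_q (hw : ∀ j, hop ρ j w = μ j • w) (hμ : ∀ j (z : ℤ), μ j + z ≠ 0)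
    (i : I₀) (m : I₀ → ℤ) :
    ρ.q i (wfam ρ μ w m) = wfam ρ μ w (Function.update m i (m i + 1)) := by
  have := wfam_op ρ hw i m (ρ.q i) (fun j hj k => comm_q_opP ρ hj k) (m i + 1) 1
    (fun v hv => by rw [key_q ρ hv (hμ i), one_smul])
  simpa using this

lemma wfam_p (hw : ∀ j, hop ρ j w = μ j • w) (hμ : ∀ j (z : ℤ), μ j + z ≠ 0)
    (i : I₀) (m : I₀ → ℤ) :
    ρ.p i (wfam ρ μ w m) = (μ i + m i) • wfam ρ μ w (Function.update m i (m i - 1)) :=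
  wfam_op ρ hw i m (ρ.p i) (fun j hj k => comm_p_opP ρ hj k) (m i - 1) (μ i + m i)
    (fun v hv => by rw [key_p ρ hv (hμ i)])

lemma wfam_hop (hw : ∀ j, hop ρ j w = μ j • w) (hμ : ∀ j (z : ℤ), μ j + z ≠ 0)
    (i : I₀) (m : I₀ → ℤ) :
    hop ρ i (wfam ρ μ w m) = (μ i + m i) • wfam ρ μ w m := by
  have h0 : hop ρ i (wfam ρ μ w m) = ρ.q i (ρ.p i (wfam ρ μ w m)) := rfl
  rw [h0, wfam_p ρ hw hμ i m, map_smul, wfam_q ρ hw hμ i _]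
  congr 2
  rw [Function.update_self, Function.update_idem, sub_add_cancel, Function.update_eq_self]

lemma noncommProd_apply_ne_zero (hnz : ∀ i, ∀ w : W, w ≠ 0 → ρ.p i w ≠ 0 ∧ ρ.q i w ≠ 0)
    (m : I₀ → ℤ) (s : Finset I₀) :
    ∀ (comm : (↑s : Set I₀).Pairwise fun a b =>
        Commute (opP ρ a (m a)) (opP ρ b (m b))),
      ∀ v : W, v ≠ 0 → s.noncommProd (fun j => opP ρ j (m j)) comm v ≠ 0 := by
  induction s using Finset.cons_induction with
  | empty => intro comm v hv; simpa using hv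
  | cons a s ha ih =>
      intro comm v hv
      rw [Finset.noncommProd_cons, Module.End.mul_apply]
      exact opP_ne_zero ρ hnz (ih _ v hv) a (m a)

lemma wfam_ne_zero (hnz : ∀ i, ∀ w : W, w ≠ 0 → ρ.p i w ≠ 0 ∧ ρ.q i w ≠ 0)
    (hμ : ∀ j (z : ℤ), μ j + z ≠ 0) (hw : w ≠ 0) (m : I₀ → ℤ) :
    wfam ρ μ w m ≠ 0 := by
  unfold wfam
  refine smul_ne_zero ?_ ?_
  · exact Finset.prod_ne_zero_iff.mpr fun j _ => inv_ne_zero (aconst_ne_zero (hμ j) (m j))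
  · exact noncommProd_apply_ne_zero ρ hnz m Finset.univ _ w hw

end fam

section joint

open Polynomial

lemma commute_aeval {T S : Module.End ℂ W} (h : Commute T S) (P : ℂ[X]) :
    Commute T (Polynomial.aeval S P) := by
  induction P using Polynomial.induction_on' with
  | add p q hp hq => rw [map_add]; exact hp.add_right hq
  | monomial n a =>
      rw [Polynomial.aeval_monomial]
      have h1 : Commute T (algebraMap ℂ (Module.End ℂ W) a) := (Algebra.commutes a T).symm
      exact h1.mul_right (h.pow_right n)

lemma refine_eigen {j : I₀} (hssj : ⨆ c : ℂ, Module.End.eigenspace (hop ρ j) c = ⊤)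
    {w : W} (hw : w ≠ 0) :
    ∃ (y : W) (c₀ : ℂ), y ≠ 0 ∧ hop ρ j y = c₀ • y ∧
      ∀ (T : Module.End ℂ W), Commute T (hop ρ j) → ∀ c : ℂ, T w = c • w → T y = c • y := by
  classical
  have hmem : w ∈ ⨆ c : ℂ, Module.End.eigenspace (hop ρ j) c := by rw [hssj]; trivial
  obtain ⟨f, hf, hsum⟩ := (Submodule.mem_iSup_iff_exists_finsupp _ _).mp hmem
  have hex : ∃ c₀, f c₀ ≠ 0 := by
    by_contra h
    push_neg at h
    apply hw
    rw [← hsum, Finsupp.sum]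
    exact Finset.sum_eq_zero fun c _ => h c
  obtain ⟨c₀, hc₀⟩ := hex
  set P : ℂ[X] := ∏ c ∈ f.support.erase c₀, (Polynomial.X - Polynomial.C c) with hP
  set y := Polynomial.aeval (hop ρ j) P w with hydef
  set d : ℂ := ∏ c ∈ f.support.erase c₀, (c₀ - c) with hd
  have heval : ∀ c, f c ≠ 0 → (Polynomial.aeval (hop ρ j)) P (f c)
      = (∏ c' ∈ f.support.erase c₀, (c - c')) • f c := by
    intro c hc
    have hev : (hop ρ j).HasEigenvector c (f c) :=
      ⟨hf c, hc⟩
    rw [Module.End.aeval_apply_of_hasEigenvector hev]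
    congr 1
    rw [hP, Polynomial.eval_prod]
    exact Finset.prod_congr rfl fun c' _ => by simp
  have hy : y = d • f c₀ := by
    rw [hydef, ← hsum, map_finsuppSum, Finsupp.sum]
    rw [Finset.sum_eq_single c₀]
    · exact heval c₀ hc₀
    · intro c hc hne
      rw [heval c (Finsupp.mem_support_iff.mp hc)]
      have : (∏ c' ∈ f.support.erase c₀, (c - c')) = 0 :=
        Finset.prod_eq_zero (Finset.mem_erase.mpr ⟨hne, hc⟩) (sub_self c)
      rw [this, zero_smul]
    · intro h
      exact absurd (Finsupp.mem_support_iff.mpr hc₀) h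
  have hdne : d ≠ 0 := by
    rw [hd]
    exact Finset.prod_ne_zero_iff.mpr fun c hc =>
      sub_ne_zero.mpr (Ne.symm (Finset.mem_erase.mp hc).1)
  refine ⟨y, c₀, ?_, ?_, ?_⟩
  · rw [hy]; exact smul_ne_zero hdne hc₀
  · rw [hy, map_smul, Module.End.mem_eigenspace_iff.mp (hf c₀), smul_comm]
  · intro T hT c hTw
    have hcomm : Commute T (Polynomial.aeval (hop ρ j) P) := commute_aeval hT P
    calc T y = (T * Polynomial.aeval (hop ρ j) P) w := rfl
      _ = (Polynomial.aeval (hop ρ j) P * T) w := by rw [hcomm.eq]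
      _ = Polynomial.aeval (hop ρ j) P (T w) := rfl
      _ = c • y := by rw [hTw, map_smul]

lemma exists_joint (hss : ∀ i, ⨆ c : ℂ, Module.End.eigenspace (hop ρ i) c = ⊤)
    {w₀ : W} (hw₀ : w₀ ≠ 0) (s : Finset I₀) :
    ∃ w : W, w ≠ 0 ∧ ∀ i ∈ s, ∃ c : ℂ, hop ρ i w = c • w := by
  induction s using Finset.cons_induction with
  | empty => exact ⟨w₀, hw₀, by simp⟩
  | cons j s hj ih =>
      obtain ⟨w, hw, hmem⟩ := ih
      obtain ⟨y, c₀, hy0, heig, hpres⟩ := refine_eigen ρ (hss j) hw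
      refine ⟨y, hy0, fun i hi => ?_⟩
      rcases Finset.mem_cons.mp hi with rfl | hi
      · exact ⟨c₀, heig⟩
      · obtain ⟨c, hc⟩ := hmem i hi
        exact ⟨c, hpres _ (comm_hop_hop ρ i j) c hc⟩

end joint

end CCP

/-- Every irreducible level-one `H_{I₀}`-module (`I₀` finite and nonempty) satisfying
Condition `C_{I₀}` — each `q_i p_i` semisimple, and `p_i w ≠ 0`, `q_i w ≠ 0` for all
nonzero `w` — is isomorphic to `M_*[μ]` for some `μ : I₀ → ℂ` with no `μ_i` an integer. -/
theorem conditionC_classification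
    {I₀ W : Type} [Fintype I₀] [Nonempty I₀] [DecidableEq I₀]
    [AddCommGroup W] [Module ℂ W]
    (ρ : HeisenbergRep I₀ W) (hirr : ρ.IsIrreducible)
    (hss : ∀ i, ⨆ c : ℂ, Module.End.eigenspace (ρ.q i * ρ.p i) c = ⊤)
    (hnz : ∀ i, ∀ w : W, w ≠ 0 → ρ.p i w ≠ 0 ∧ ρ.q i w ≠ 0) :
    ∃ mu : I₀ → ℂ, (∀ i, ∀ n : ℤ, mu i ≠ (n : ℂ)) ∧
      ∃ e : ((I₀ → ℤ) →₀ ℂ) ≃ₗ[ℂ] W,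
        (∀ i f, e (laurentP mu i f) = ρ.p i (e f)) ∧
        (∀ i f, e (laurentQ i f) = ρ.q i (e f)) := by
  classical
  obtain ⟨w₀, hw₀⟩ : ∃ w : W, w ≠ 0 := by
    by_contra h
    push_neg at h
    refine hirr.2.1 ?_
    rw [Submodule.eq_bot_iff]
    intro x _
    exact h x
  obtain ⟨w, hw, hjoint⟩ := CCP.exists_joint ρ (fun i => hss i) hw₀ Finset.univ
  choose μ hcfun using fun i => hjoint i (Finset.mem_univ i)
  have hμ : ∀ i (z : ℤ), μ i + z ≠ 0 := fun i z => CCP.eig_shift_ne ρ hnz (hcfun i) hw z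
  set v : (I₀ → ℤ) → W := CCP.wfam ρ μ w with hv
  have hQ : ∀ i m, ρ.q i (v m) = v (Function.update m i (m i + 1)) :=
    fun i m => CCP.wfam_q ρ hcfun hμ i m
  have hP : ∀ i m, ρ.p i (v m) = (μ i + m i) • v (Function.update m i (m i - 1)) :=
    fun i m => CCP.wfam_p ρ hcfun hμ i m
  have hH : ∀ i m, CCP.hop ρ i (v m) = (μ i + m i) • v m :=
    fun i m => CCP.wfam_hop ρ hcfun hμ i m
  set e₀ : ((I₀ → ℤ) →₀ ℂ) →ₗ[ℂ] W := Finsupp.linearCombination ℂ v with he₀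
  have hsingle : ∀ m : I₀ → ℤ, e₀ (Finsupp.single m 1) = v m := by
    intro m
    rw [he₀, Finsupp.linearCombination_single, one_smul]
  have hsingle' : ∀ (m : I₀ → ℤ) (c : ℂ), e₀ (Finsupp.single m c) = c • v m := by
    intro m c
    rw [he₀, Finsupp.linearCombination_single]
  have hiP : ∀ i f, e₀ (laurentP μ i f) = ρ.p i (e₀ f) := by
    intro i f
    have hcomp : e₀.comp (laurentP μ i) = (ρ.p i) ∘ₗ e₀ := by
      refine Finsupp.lhom_ext fun m c => ?_
      have h1 : laurentP μ i (Finsupp.single m c)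
          = (μ i + m i) • Finsupp.single (Function.update m i (m i - 1)) c := by
        rw [laurentP, Finsupp.lsum_single]
        simp
      show e₀ (laurentP μ i (Finsupp.single m c)) = ρ.p i (e₀ (Finsupp.single m c))
      rw [h1, map_smul]
      simp only [hsingle']
      rw [map_smul, hP i m, smul_comm]
    exact DFunLike.congr_fun hcomp f
  have hiQ : ∀ i f, e₀ (laurentQ i f) = ρ.q i (e₀ f) := by
    intro i f
    have hcomp : e₀.comp (laurentQ i) = (ρ.q i) ∘ₗ e₀ := by
      refine Finsupp.lhom_ext fun m c => ?_
      have h1 : laurentQ i (Finsupp.single m c)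
          = Finsupp.single (Function.update m i (m i + 1)) c := by
        rw [laurentQ, Finsupp.lsum_single]
        simp
      show e₀ (laurentQ i (Finsupp.single m c)) = ρ.q i (e₀ (Finsupp.single m c))
      rw [h1]
      simp only [hsingle']
      rw [map_smul, hQ i m]
    exact DFunLike.congr_fun hcomp f
  have hind := Module.End.independent_iInf_maxGenEigenspace_of_forall_mapsTo
    (fun i => CCP.hop ρ i)
    (fun i j φ => Module.End.mapsTo_maxGenEigenspace_of_comm (CCP.comm_hop_hop ρ j i) φ)
  set χ : (I₀ → ℤ) → (I₀ → ℂ) := fun m i => μ i + m i with hχdef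
  have hχ : Function.Injective χ := by
    intro m m' h
    funext i
    have h1 : μ i + (m i : ℂ) = μ i + (m' i : ℂ) := congrFun h i
    have h2 : ((m i : ℤ) : ℂ) = ((m' i : ℤ) : ℂ) := by linear_combination h1
    exact_mod_cast h2
  have hLI : LinearIndependent ℂ v := by
    refine iSupIndep.linearIndependent _ (hind.comp hχ) ?_ ?_
    · intro m
      refine Submodule.mem_iInf _ |>.mpr fun i => ?_
      rw [Module.End.mem_maxGenEigenspace]
      refine ⟨1, ?_⟩
      rw [pow_one, LinearMap.sub_apply, LinearMap.smul_apply, Module.End.one_apply,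
        hH i m, sub_self]
    · intro m
      exact CCP.wfam_ne_zero ρ hnz hμ hw m
  have hinj : Function.Injective e₀ := by
    rw [he₀]
    exact linearIndependent_iff_injective_finsuppLinearCombination.mp hLI
  have hstable : ρ.Stable (LinearMap.range e₀) := by
    constructor
    · intro i x hx
      obtain ⟨f, rfl⟩ := LinearMap.mem_range.mp hx
      exact LinearMap.mem_range.mpr ⟨laurentP μ i f, hiP i f⟩
    · intro i x hx
      obtain ⟨f, rfl⟩ := LinearMap.mem_range.mp hx
      exact LinearMap.mem_range.mpr ⟨laurentQ i f, hiQ i f⟩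
  have hrange : LinearMap.range e₀ = ⊤ := by
    rcases hirr.2.2 (LinearMap.range e₀) hstable le_top with h | h
    · exfalso
      have hmem : v 0 ∈ LinearMap.range e₀ :=
        LinearMap.mem_range.mpr ⟨Finsupp.single 0 1, hsingle 0⟩
      rw [h] at hmem
      exact CCP.wfam_ne_zero ρ hnz hμ hw 0 (Submodule.mem_bot ℂ |>.mp hmem)
    · exact h
  have hsurj : Function.Surjective e₀ := LinearMap.range_eq_top.mp hrange
  refine ⟨μ, ?_, LinearEquiv.ofBijective e₀ ⟨hinj, hsurj⟩, ?_, ?_⟩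
  · intro i n h
    refine hμ i (-n) ?_
    rw [h]
    push_cast
    ring
  · intro i f
    exact hiP i f
  · intro i f
    exact hiQ i f
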